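/- Let n ≥ 2, let u ∈ ℝⁿ be unit timelike, and let R be a symmetric real n×n matrix (a Ricci-like tensor). Then θ_uᵀ R θ_u = R (R is purely electric with respect to u) if and only if Ru is a scalar multiple of ηu, i.e., if and only if u is an eigenvector of the operator ηR. Moreover, in this case ηR is diagonalizable over ℝ: there exists a basis of ℝⁿ consisting of eigenvectors of ηR, and in particular all eigenvalues of ηR are real. -/

import Mathlib

open Matrix

noncomputable section

/-- The Minkowski metric `η = diag(-1, 1, …, 1)` on `ℝⁿ`. -/
def eta (n : ℕ) : Matrix (Fin n) (Fin n) ℝ :=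
  Matrix.diagonal fun i => if i.val = 0 then (-1 : ℝ) else 1

/-- The reflection `θ_u = I + 2u(ηu)ᵀ` sending `u ↦ -u` and fixing `u^⊥`. -/
def theta {n : ℕ} (u : Fin n → ℝ) : Matrix (Fin n) (Fin n) ℝ :=
  1 + (2 : ℝ) • vecMulVec u ((eta n).mulVec u)

namespace Stmt14Aux

variable {n : ℕ}

lemma vvT (a b : Fin n → ℝ) : (vecMulVec a b)ᵀ = vecMulVec b a := by
  ext i j; simp [vecMulVec_apply, mul_comm]

lemma mul_vv (M : Matrix (Fin n) (Fin n) ℝ) (a b : Fin n → ℝ) :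
    M * vecMulVec a b = vecMulVec (M *ᵥ a) b := by
  ext i j
  simp [mul_apply, vecMulVec_apply, mulVec, dotProduct, Finset.sum_mul, mul_assoc]

lemma vv_mul (M : Matrix (Fin n) (Fin n) ℝ) (a b : Fin n → ℝ) :
    vecMulVec a b * M = vecMulVec a (b ᵥ* M) := by
  ext i j
  simp [mul_apply, vecMulVec_apply, vecMul, dotProduct, Finset.mul_sum, mul_assoc]

lemma vv_mulVec (a b x : Fin n → ℝ) : (vecMulVec a b) *ᵥ x = (b ⬝ᵥ x) • a := by
  ext i
  simp [mulVec, vecMulVec_apply, dotProduct, Finset.mul_sum, Finset.sum_mul]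
  congr 1; ext k; ring

lemma vv_smul_left (c : ℝ) (a b : Fin n → ℝ) :
    vecMulVec (c • a) b = c • vecMulVec a b := by
  ext i j; simp [vecMulVec_apply]; ring

lemma vv_smul_right (c : ℝ) (a b : Fin n → ℝ) :
    vecMulVec a (c • b) = c • vecMulVec a b := by
  ext i j; simp [vecMulVec_apply]; ring

lemma eta_mul_eta : eta n * eta n = 1 := by
  ext i j
  rw [eta, diagonal_mul_diagonal]
  by_cases h : i = j
  · subst h; by_cases h0 : i.val = 0 <;> simp [diagonal_apply_eq, h0, one_apply]
  · simp [diagonal_apply_ne _ h, one_apply, h]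

lemma eta_transpose : (eta n)ᵀ = eta n := diagonal_transpose _

end Stmt14Aux

namespace Stmt14Aux

variable {n : ℕ}

lemma vv_mul_vv (a b c d : Fin n → ℝ) :
    vecMulVec a b * vecMulVec c d = (b ⬝ᵥ c) • vecMulVec a d := by
  ext i j
  simp only [mul_apply, vecMulVec_apply, Matrix.smul_apply, dotProduct, Finset.sum_mul, smul_eq_mul]
  refine Finset.sum_congr rfl fun k _ => by ring

lemma eta_dot (hn0 : 0 < n) (a b : Fin n → ℝ) :
    a ⬝ᵥ ((eta n) *ᵥ b) = -(a ⟨0, hn0⟩ * b ⟨0, hn0⟩) +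
      ∑ i ∈ Finset.univ.erase ⟨0, hn0⟩, a i * b i := by
  set z : Fin n := ⟨0, hn0⟩ with hz
  rw [dotProduct, ← Finset.sum_erase_add _ _ (Finset.mem_univ z)]
  have h1 : ∀ i ∈ Finset.univ.erase z, a i * ((eta n) *ᵥ b) i = a i * b i := by
    intro i hi
    have hi0 : ¬ i.val = 0 := fun h => (Finset.mem_erase.1 hi).1 (Fin.ext h)
    simp [eta, mulVec_diagonal, hi0]
  rw [Finset.sum_congr rfl h1]
  have h2 : ((eta n) *ᵥ b) z = -(b z) := by simp [eta, mulVec_diagonal, hz]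
  rw [h2]; ring

lemma h_posdef (hn : 2 ≤ n) (u : Fin n → ℝ) (hu : u ⬝ᵥ (eta n).mulVec u = -1) :
    (eta n + (2:ℝ) • vecMulVec ((eta n) *ᵥ u) ((eta n) *ᵥ u)).PosDef := by
  have hn0 : 0 < n := by omega
  set z : Fin n := ⟨0, hn0⟩ with hz
  set w : Fin n → ℝ := (eta n) *ᵥ u with hw
  refine posDef_iff_dotProduct_mulVec.2 ⟨?_, ?_⟩
  · show _ = _
    rw [conjTranspose_eq_transpose_of_trivial, transpose_add, eta_transpose,
      transpose_smul, vvT]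
  · intro x hx
    set B := ∑ i ∈ Finset.univ.erase z, u i ^ 2 with hB
    set S := ∑ i ∈ Finset.univ.erase z, x i ^ 2 with hS
    set T := ∑ i ∈ Finset.univ.erase z, u i * x i with hT
    have hsq : ∀ y : Fin n → ℝ, ∑ i ∈ Finset.univ.erase z, y i * y i
        = ∑ i ∈ Finset.univ.erase z, y i ^ 2 :=
      fun y => Finset.sum_congr rfl fun i _ => (pow_two (y i)).symm
    have hA : u z * u z = 1 + B := by
      have h1 := eta_dot hn0 u u
      rw [hu, hsq u] at h1
      rw [hB]; linarith
    have hCS : T ^ 2 ≤ B * S := Finset.sum_mul_sq_le_sq_mul_sq _ u x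
    have hB0 : 0 ≤ B := Finset.sum_nonneg fun i _ => sq_nonneg _
    have hS0 : 0 ≤ S := Finset.sum_nonneg fun i _ => sq_nonneg _
    have hwx : w ⬝ᵥ x = -(u z * x z) + T := by
      rw [hw, dotProduct_comm, eta_dot hn0 x u,
        Finset.sum_congr rfl (fun i _ => mul_comm (x i) (u i)), ← hT]
      ring
    have hq : star x ⬝ᵥ ((eta n + (2:ℝ) • vecMulVec w w) *ᵥ x)
        = (-(x z * x z) + S) + 2 * ((-(u z * x z) + T) * (-(u z * x z) + T)) := by
      have hstar : star x = x := by funext i; simp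
      rw [hstar, add_mulVec, smul_mulVec, vv_mulVec, dotProduct_add,
        eta_dot hn0 x x, hsq x, dotProduct_smul, dotProduct_smul,
        dotProduct_comm x w, hwx]
      simp only [smul_eq_mul, ← hz]
      try ring
    rw [hq]
    obtain ⟨j, hj⟩ := Function.ne_iff.1 hx
    rw [Pi.zero_apply] at hj
    rcases hS0.lt_or_eq with hSpos | hSzero
    · have key : (1+2*B) * (-(x z * x z) + S + 2 * ((-(u z * x z) + T) * (-(u z * x z) + T)))
          = ((1+2*B)*x z - 2*u z*T)^2 + ((1+2*B)*S - 2*T^2) := by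
        linear_combination (2*(1+2*B)*(x z * x z) - 4*T^2) * hA
      have h12 : (0:ℝ) < 1 + 2*B := by linarith
      have pos : 0 < (1+2*B) * (-(x z * x z) + S + 2 * ((-(u z * x z) + T) * (-(u z * x z) + T))) := by
        rw [key]
        nlinarith [sq_nonneg ((1+2*B)*x z - 2*u z*T), hCS, hSpos]
      by_contra hq0
      push_neg at hq0
      nlinarith [mul_nonpos_of_nonneg_of_nonpos h12.le hq0]
    · have hT2 : T ^ 2 = 0 := le_antisymm (by nlinarith) (sq_nonneg T)
      have hT0 : T = 0 := by
        have := sq_eq_zero_iff.1 hT2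
        exact this
      have hxz : x z ≠ 0 := by
        by_cases hjz : j = z
        · rwa [hjz] at hj
        · exfalso
          have hjm : j ∈ Finset.univ.erase z := Finset.mem_erase.2 ⟨hjz, Finset.mem_univ j⟩
          have h1 : x j ^ 2 ≤ S := Finset.single_le_sum (fun i _ => sq_nonneg (x i)) hjm
          have h2 : 0 < x j ^ 2 := by positivity
          linarith
      have hx2 : 0 < x z * x z := mul_self_pos.2 hxz
      rw [hT0, ← hSzero]
      nlinarith [hA, hB0, hx2, mul_nonneg hB0 hx2.le]

end Stmt14Aux

namespace Stmt14Aux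

variable {n : ℕ}

lemma thetaT (u : Fin n → ℝ) :
    (theta u)ᵀ = 1 + (2:ℝ) • vecMulVec ((eta n) *ᵥ u) u := by
  rw [theta, transpose_add, transpose_one, transpose_smul, vvT]

lemma pe_iff (u : Fin n → ℝ) (hu : u ⬝ᵥ (eta n).mulVec u = -1)
    (R : Matrix (Fin n) (Fin n) ℝ) (hR : Rᵀ = R) :
    (theta u)ᵀ * R * theta u = R ↔ ∃ c : ℝ, R *ᵥ u = c • ((eta n) *ᵥ u) := by
  set w : Fin n → ℝ := (eta n) *ᵥ u with hw
  have hwu : w ⬝ᵥ u = -1 := by rw [dotProduct_comm]; exact hu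
  constructor
  · intro hPE
    have hθu : theta u *ᵥ u = -u := by
      funext i
      rw [theta, add_mulVec, one_mulVec, smul_mulVec, vv_mulVec, hwu]
      simp only [Pi.add_apply, Pi.smul_apply, Pi.neg_apply, smul_eq_mul]
      ring
    have happ := congrArg (fun M => M *ᵥ u) hPE
    simp only [← mulVec_mulVec] at happ
    rw [hθu, mulVec_neg, mulVec_neg, thetaT, add_mulVec, one_mulVec,
      smul_mulVec, vv_mulVec] at happ
    refine ⟨-(u ⬝ᵥ (R *ᵥ u)), ?_⟩
    funext i
    have h := congrFun happ i
    simp only [Pi.neg_apply, Pi.add_apply, Pi.smul_apply, smul_eq_mul] at h ⊢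
    linarith
  · rintro ⟨c, hv⟩
    have hvm : u ᵥ* R = c • w := by rw [← mulVec_transpose, hR, hv]
    have h1 : (theta u)ᵀ * R = R + (2*c) • vecMulVec w w := by
      rw [thetaT, Matrix.add_mul, Matrix.one_mul, Matrix.smul_mul, vv_mul, hvm,
        vv_smul_right, smul_smul]
    have h3 : vecMulVec w w * theta u = - vecMulVec w w := by
      rw [theta, Matrix.mul_add, Matrix.mul_one, Matrix.mul_smul]
      simp only [← hw]
      rw [vv_mul_vv, hwu]
      module
    rw [h1, Matrix.add_mul, Matrix.smul_mul, h3]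
    have h2 : R * theta u = R + (2*c) • vecMulVec w w := by
      rw [theta, Matrix.mul_add, Matrix.mul_one, Matrix.mul_smul, mul_vv, hv,
        vv_smul_left, smul_smul]
    rw [h2]
    module

lemma comm_h (u : Fin n → ℝ) (R : Matrix (Fin n) (Fin n) ℝ) (hR : Rᵀ = R)
    (c : ℝ) (hv : R *ᵥ u = c • ((eta n) *ᵥ u)) :
    (eta n + (2:ℝ) • vecMulVec ((eta n) *ᵥ u) ((eta n) *ᵥ u)) * (eta n * R)
      = (eta n * R)ᵀ * (eta n + (2:ℝ) • vecMulVec ((eta n) *ᵥ u) ((eta n) *ᵥ u)) := by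
  have hMT : (eta n * R)ᵀ = R * eta n := by rw [transpose_mul, hR, eta_transpose]
  have hRe : (R * eta n) *ᵥ ((eta n) *ᵥ u) = c • ((eta n) *ᵥ u) := by
    rw [mulVec_mulVec, Matrix.mul_assoc, eta_mul_eta, Matrix.mul_one, hv]
  have hvmul : ((eta n) *ᵥ u) ᵥ* (eta n * R) = c • ((eta n) *ᵥ u) := by
    rw [← mulVec_transpose, hMT, hRe]
  rw [hMT, Matrix.add_mul, Matrix.smul_mul, vv_mul, hvmul, vv_smul_right,
    ← Matrix.mul_assoc, eta_mul_eta, Matrix.one_mul,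
    Matrix.mul_add, Matrix.mul_smul, mul_vv, hRe, vv_smul_left,
    Matrix.mul_assoc, eta_mul_eta, Matrix.mul_one]

open scoped MatrixOrder ComplexOrder in
lemma diag_of_comm {h M : Matrix (Fin n) (Fin n) ℝ} (hp : h.PosDef)
    (hcomm : h * M = Mᵀ * h) :
    (∃ b : Module.Basis (Fin n) ℝ (Fin n → ℝ), ∀ i, ∃ μ : ℝ, M *ᵥ (b i) = μ • (b i)) ∧
    (∀ μ : ℂ, (∃ v : Fin n → ℂ, v ≠ 0 ∧
        (M.map (fun x => (x : ℂ))) *ᵥ v = μ • v) → μ.im = 0) := by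
  set Sq := CFC.sqrt h with hSqdef
  have hSqherm : Sqᵀ = Sq := by
    have h1 : Sqᴴ = Sq := (Matrix.nonneg_iff_posSemidef.1 (CFC.sqrt_nonneg h)).1
    rwa [conjTranspose_eq_transpose_of_trivial] at h1
  have hSqh : Sq * Sq = h := CFC.sqrt_mul_sqrt_self h (Matrix.nonneg_iff_posSemidef.2 hp.posSemidef)
  have hdet : IsUnit Sq.det := by
    have hd : Sq.det * Sq.det = h.det := by rw [← det_mul, hSqh]
    have hne : h.det ≠ 0 := ne_of_gt hp.det_pos
    exact isUnit_iff_ne_zero.2 (fun h0 => hne (by rw [← hd, h0, zero_mul]))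
  have hSS : Sq * Sq⁻¹ = 1 := mul_nonsing_inv _ hdet
  have hS'S : Sq⁻¹ * Sq = 1 := nonsing_inv_mul _ hdet
  set M' := Sq * M * Sq⁻¹ with hM'def
  have hswap : M' * Sq = Sq * M := by
    rw [hM'def, Matrix.mul_assoc (Sq * M), hS'S, Matrix.mul_one]
  have e1 : Mᵀ * Sq * Sq = Sq * Sq * M := by
    rw [Matrix.mul_assoc, hSqh]
    exact hcomm.symm
  have key : Sq⁻¹ * (Mᵀ * Sq) = Sq * M * Sq⁻¹ := by
    calc Sq⁻¹ * (Mᵀ * Sq) = Sq⁻¹ * (Mᵀ * Sq) * (Sq * Sq⁻¹) := by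
          rw [hSS, Matrix.mul_one]
      _ = Sq⁻¹ * (Mᵀ * Sq * Sq) * Sq⁻¹ := by simp only [Matrix.mul_assoc]
      _ = Sq⁻¹ * (Sq * Sq * M) * Sq⁻¹ := by rw [e1]
      _ = (Sq⁻¹ * Sq) * (Sq * M * Sq⁻¹) := by simp only [Matrix.mul_assoc]
      _ = Sq * M * Sq⁻¹ := by rw [hS'S, Matrix.one_mul]
  have hherm : M'.IsHermitian := by
    show M'ᴴ = M'
    rw [conjTranspose_eq_transpose_of_trivial, hM'def,
      transpose_mul, transpose_mul, transpose_nonsing_inv, hSqherm]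
    exact key
  have hMS2 : M * Sq⁻¹ = Sq⁻¹ * M' := by
    rw [hM'def]
    rw [show Sq⁻¹ * (Sq * M * Sq⁻¹) = (Sq⁻¹ * Sq) * (M * Sq⁻¹) by
      simp only [Matrix.mul_assoc], hS'S, Matrix.one_mul]
  constructor
  · have hinv : Invertible Sq := Sq.invertibleOfIsUnitDet hdet
    let L2 : (Fin n → ℝ) ≃ₗ[ℝ] (Fin n → ℝ) :=
      LinearEquiv.ofLinear (Matrix.mulVecLin Sq⁻¹) (Matrix.mulVecLin Sq)
        (by rw [← Matrix.mulVecLin_mul, hS'S, Matrix.mulVecLin_one])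
        (by rw [← Matrix.mulVecLin_mul, hSS, Matrix.mulVecLin_one])
    let L1 : EuclideanSpace ℝ (Fin n) ≃ₗ[ℝ] (Fin n → ℝ) :=
      WithLp.linearEquiv 2 ℝ (Fin n → ℝ)
    refine ⟨(hherm.eigenvectorBasis.toBasis.map (L1.trans L2)), fun i => ?_⟩
    refine ⟨hherm.eigenvalues i, ?_⟩
    have he := hherm.mulVec_eigenvectorBasis i
    have hbi : (hherm.eigenvectorBasis.toBasis.map (L1.trans L2)) i
        = Sq⁻¹ *ᵥ ((hherm.eigenvectorBasis i).ofLp) := by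
      simp only [Module.Basis.map_apply, OrthonormalBasis.coe_toBasis,
        LinearEquiv.trans_apply]
      rfl
    rw [hbi, mulVec_mulVec, hMS2, ← mulVec_mulVec, he, mulVec_smul]
  · rintro μ ⟨v, hv0, hveq⟩
    have hfun : (fun x : ℝ => (x : ℂ)) = ⇑(Complex.ofRealHom) := rfl
    set Sc := Sq.map (fun x : ℝ => (x : ℂ)) with hScdef
    set Mc := M.map (fun x : ℝ => (x : ℂ)) with hMcdef
    set M'c := M'.map (fun x : ℝ => (x : ℂ)) with hM'cdef
    have hswapC : M'c * Sc = Sc * Mc := by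
      rw [hM'cdef, hScdef, hMcdef, hfun, ← Matrix.map_mul, ← Matrix.map_mul, hswap]
    have hScinv : (Sq⁻¹.map (fun x : ℝ => (x : ℂ))) * Sc = 1 := by
      rw [hScdef, hfun, ← Matrix.map_mul, hS'S]
      exact Matrix.map_one _ (map_zero _) (map_one _)
    set vc := Sc *ᵥ v with hvcdef
    have hvc0 : vc ≠ 0 := by
      intro h0
      apply hv0
      have : (Sq⁻¹.map (fun x : ℝ => (x : ℂ))) *ᵥ vc = v := by
        rw [hvcdef, mulVec_mulVec, hScinv, one_mulVec]
      rw [← this, h0, mulVec_zero]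
    have hhermC : M'cᴴ = M'c := by
      have hM's : M'ᵀ = M' := by
        rw [← conjTranspose_eq_transpose_of_trivial]; exact hherm
      ext i j
      simp only [hM'cdef, conjTranspose_apply, Matrix.map_apply, RCLike.star_def,
        Complex.conj_ofReal]
      exact congrArg _ (congrFun (congrFun hM's i) j)
    have hvc : M'c *ᵥ vc = μ • vc := by
      rw [hvcdef, mulVec_mulVec, hswapC, ← mulVec_mulVec, hveq, mulVec_smul]
    have hrow : star (M'c *ᵥ vc) = star vc ᵥ* M'c := by
      rw [star_mulVec, hhermC]
    have hd1 : star vc ⬝ᵥ (M'c *ᵥ vc) = μ * (star vc ⬝ᵥ vc) := by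
      rw [hvc, dotProduct_smul, smul_eq_mul]
    have hd2 : star vc ⬝ᵥ (M'c *ᵥ vc) = star μ * (star vc ⬝ᵥ vc) := by
      rw [dotProduct_mulVec, ← hrow, hvc, star_smul, smul_dotProduct, smul_eq_mul]
    have hp0 : star vc ⬝ᵥ vc ≠ 0 := by
      intro h0
      exact hvc0 (dotProduct_star_self_eq_zero.1 h0)
    have hμ : (starRingEnd ℂ) μ = μ := by
      have := hd2.symm.trans hd1
      exact mul_right_cancel₀ hp0 this
    exact Complex.conj_eq_iff_im.1 hμ

end Stmt14Aux

/-- A symmetric (Ricci-like) matrix `R` is purely electric with respect to a unit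
timelike `u` iff `u` is an eigenvector of the Ricci operator `ηR` (i.e. `Ru` is a
scalar multiple of `ηu`); moreover, in this case `ηR` is diagonalizable over `ℝ`
(there is a basis of eigenvectors of `ηR`), and in particular all (complex)
eigenvalues of `ηR` are real. -/
theorem stmt14 {n : ℕ} (hn : 2 ≤ n) (u : Fin n → ℝ)
    (hu : u ⬝ᵥ (eta n).mulVec u = -1)
    (R : Matrix (Fin n) (Fin n) ℝ) (hR : Rᵀ = R) :
    ((theta u)ᵀ * R * theta u = R ↔
      ∃ c : ℝ, R.mulVec u = c • ((eta n).mulVec u)) ∧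
    ((theta u)ᵀ * R * theta u = R →
      (∃ b : Module.Basis (Fin n) ℝ (Fin n → ℝ), ∀ i, ∃ μ : ℝ,
        (eta n * R).mulVec (b i) = μ • (b i)) ∧
      (∀ μ : ℂ, (∃ v : Fin n → ℂ, v ≠ 0 ∧
          ((eta n * R).map (fun x => (x : ℂ))).mulVec v = μ • v) → μ.im = 0)) := by
  constructor
  · exact Stmt14Aux.pe_iff u hu R hR
  · intro hPE
    obtain ⟨c, hv⟩ := (Stmt14Aux.pe_iff u hu R hR).1 hPE
    exact Stmt14Aux.diag_of_comm (Stmt14Aux.h_posdef hn u hu)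
      (Stmt14Aux.comm_h u R hR c hv)

end
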